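/- Let f : L → Y be a C¹ map between Banach spaces all of whose derivatives d_v f : L → Y are Fredholm operators. Then f is locally proper: every point v ∈ L has arbitrarily small neighborhoods N and neighborhoods U of f(v) such that f restricts to a proper map N → U. Concretely, locally near v the map f factors (up to choosing a finite-dimensional complement T₀ of im(d_v f) and applying the inverse function theorem) as a closed embedding followed by a projection with finite-dimensional fibers, both of which are locally proper. -/

import Mathlib

open Set Topology Filter

/-- Locally proper (in the sense of the paper): every point `y` and neighborhood `V` of `y`
admit neighborhoods `U ∋ f y` and `N ⊆ f⁻¹' U ∩ V` of `y` such that the restriction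
`N → U` of `f` is proper, i.e. separated and universally closed. -/
def IsLocallyProper {Y S : Type*} [TopologicalSpace Y] [TopologicalSpace S]
    (f : Y → S) : Prop :=
  ∀ y : Y, ∀ V ∈ 𝓝 y, ∃ N ∈ 𝓝 y, ∃ U ∈ 𝓝 (f y), N ⊆ f ⁻¹' U ∩ V ∧
    ∃ hm : Set.MapsTo f N U,
      IsSeparatedMap (hm.restrict f N U) ∧ IsProperMap (hm.restrict f N U)

/-- A `C¹` map between Banach spaces all of whose derivatives are Fredholm operators is
locally proper. -/
theorem stmt_18 {L Y : Type*}
    [NormedAddCommGroup L] [NormedSpace ℝ L] [CompleteSpace L]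
    [NormedAddCommGroup Y] [NormedSpace ℝ Y] [CompleteSpace Y]
    (f : L → Y) (hf : ContDiff ℝ 1 f)
    (hker : ∀ v : L, FiniteDimensional ℝ (LinearMap.ker ((fderiv ℝ f v) : L →ₗ[ℝ] Y)))
    (hcoker : ∀ v : L,
      FiniteDimensional ℝ (Y ⧸ LinearMap.range ((fderiv ℝ f v) : L →ₗ[ℝ] Y)))
    (hclosed : ∀ v : L, IsClosed (Set.range (fderiv ℝ f v))) :
    IsLocallyProper f := by
  intro v V hV
  classical
  set D := fderiv ℝ f v with hDdef
  haveI hKfd : FiniteDimensional ℝ (LinearMap.ker (D : L →ₗ[ℝ] Y)) := hker v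
  obtain ⟨π, hπ⟩ :=
    Submodule.ClosedComplemented.of_finiteDimensional (LinearMap.ker (D : L →ₗ[ℝ] Y))
  set R := LinearMap.range (D : L →ₗ[ℝ] Y) with hRdef
  obtain ⟨T, hT⟩ := Submodule.exists_isCompl R
  haveI : FiniteDimensional ℝ (Y ⧸ R) := hcoker v
  haveI : FiniteDimensional ℝ T :=
    LinearEquiv.finiteDimensional (Submodule.quotientEquivOfIsCompl R T hT)
  -- the continuous linear map `Φ (x, t) = (D x + t, π x)`
  set Φ : (L × ↥T) →L[ℝ] Y × ↥(LinearMap.ker (D : L →ₗ[ℝ] Y)) :=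
    ((D.comp (ContinuousLinearMap.fst ℝ L ↥T)) +
      (T.subtypeL).comp (ContinuousLinearMap.snd ℝ L ↥T)).prod
      (π.comp (ContinuousLinearMap.fst ℝ L ↥T)) with hΦdef
  have hΦapp : ∀ x : L, ∀ t : ↥T, Φ (x, t) = (D x + ↑t, π x) := by
    intro x t; rfl
  -- injectivity
  have hinj : LinearMap.ker (Φ : (L × ↥T) →ₗ[ℝ] Y × ↥(LinearMap.ker (D : L →ₗ[ℝ] Y))) = ⊥ := by
    rw [eq_bot_iff]
    rintro ⟨x, t⟩ h
    rw [LinearMap.mem_ker] at h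
    rw [ContinuousLinearMap.coe_coe, hΦapp] at h
    have h1 : D x + (t : Y) = 0 := congrArg Prod.fst h
    have h2 : π x = 0 := congrArg Prod.snd h
    have hDx : D x = -(t : Y) := eq_neg_of_add_eq_zero_left h1
    have hDxR : D x ∈ R := LinearMap.mem_range.2 ⟨x, rfl⟩
    have hDxT : D x ∈ T := by rw [hDx]; exact T.neg_mem t.2
    have hDx0 : D x = 0 := (Submodule.disjoint_def.1 hT.disjoint) _ hDxR hDxT
    have ht0 : (t : Y) = 0 := by rw [hDx] at hDx0; simpa using hDx0.symm
    have hxK : x ∈ LinearMap.ker (D : L →ₗ[ℝ] Y) := LinearMap.mem_ker.2 hDx0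
    have hx0 : x = 0 := by
      have := hπ ⟨x, hxK⟩
      rw [h2] at this
      simpa using congrArg Subtype.val this.symm
    simp [Submodule.mem_bot, Prod.ext_iff, hx0]
    exact_mod_cast ht0
  -- surjectivity
  have hsurj : LinearMap.range (Φ : (L × ↥T) →ₗ[ℝ] Y × ↥(LinearMap.ker (D : L →ₗ[ℝ] Y))) = ⊤ := by
    rw [LinearMap.range_eq_top]
    rintro ⟨y, k⟩
    have hy : y ∈ R ⊔ T := by rw [hT.sup_eq_top]; trivial
    obtain ⟨r, hr, t, ht, hy'⟩ := Submodule.mem_sup.1 hy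
    obtain ⟨x₀, hx₀⟩ := LinearMap.mem_range.1 hr
    refine ⟨(x₀ - ↑(π x₀) + ↑k, ⟨t, ht⟩), ?_⟩
    rw [ContinuousLinearMap.coe_coe, hΦapp]
    have hD1 : D ((π x₀ : L)) = 0 := LinearMap.mem_ker.1 (π x₀).2
    have hD2 : D ((k : L)) = 0 := LinearMap.mem_ker.1 k.2
    have hDx : D (x₀ - ↑(π x₀) + ↑k) = r := by
      rw [map_add, map_sub, hD1, hD2, add_zero, sub_zero]
      exact hx₀
    have hπx : π (x₀ - ↑(π x₀) + ↑k) = k := by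
      rw [map_add, map_sub, hπ (π x₀), hπ k, sub_self, zero_add]
    rw [hDx, hπx, hy']
  set Φ' := ContinuousLinearEquiv.ofBijective Φ hinj hsurj with hΦ'def
  -- the auxiliary map `F (x, t) = (f x + t, π x)` and the inverse function theorem
  set F : L × ↥T → Y × ↥(LinearMap.ker (D : L →ₗ[ℝ] Y)) :=
    fun p => (f p.1 + (p.2 : Y), π p.1) with hFdef
  have hstrict : HasStrictFDerivAt f D v :=
    (hf.contDiffAt).hasStrictFDerivAt one_ne_zero
  have hF : HasStrictFDerivAt F
      (Φ' : (L × ↥T) →L[ℝ] Y × ↥(LinearMap.ker (D : L →ₗ[ℝ] Y))) ((v, 0) : L × ↥T) := by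
    have h1 : HasStrictFDerivAt (fun p : L × ↥T => f p.1)
        (D.comp (ContinuousLinearMap.fst ℝ L ↥T)) ((v, 0) : L × ↥T) :=
      HasStrictFDerivAt.comp _ hstrict hasStrictFDerivAt_fst
    have h2 : HasStrictFDerivAt (fun p : L × ↥T => ((p.2 : Y)))
        ((T.subtypeL).comp (ContinuousLinearMap.snd ℝ L ↥T)) ((v, 0) : L × ↥T) :=
      ((T.subtypeL).comp (ContinuousLinearMap.snd ℝ L ↥T)).hasStrictFDerivAt
    have h3 : HasStrictFDerivAt (fun p : L × ↥T => π p.1)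
        (π.comp (ContinuousLinearMap.fst ℝ L ↥T)) ((v, 0) : L × ↥T) :=
      (π.comp (ContinuousLinearMap.fst ℝ L ↥T)).hasStrictFDerivAt
    have h4 := HasStrictFDerivAt.prodMk (h1.add h2) h3
    have hcoe : (Φ' : (L × ↥T) →L[ℝ] Y × ↥(LinearMap.ker (D : L →ₗ[ℝ] Y))) = Φ :=
      ContinuousLinearEquiv.coe_ofBijective Φ hinj hsurj
    rw [hcoe]
    exact h4
  set e := hF.toOpenPartialHomeomorph F with hedef
  have hecoe : ⇑e = F := hF.toOpenPartialHomeomorph_coe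
  have hsrc : ((v, 0) : L × ↥T) ∈ e.source := hF.mem_toOpenPartialHomeomorph_source
  set k₀ := π v with hk₀def
  have hFv : F ((v, 0) : L × ↥T) = (f v, k₀) := by
    simp [hFdef, hk₀def]
  have hev : e ((v, 0) : L × ↥T) = (f v, k₀) := by rw [hecoe]; exact hFv
  have htgt : (f v, k₀) ∈ e.target := hev ▸ e.map_source hsrc
  have hsymm_v : e.symm (f v, k₀) = ((v, 0) : L × ↥T) := by
    rw [← hev]; exact e.left_inv hsrc
  -- choose a product closed ball inside the target landing in `V`
  set V₀ := interior V with hV₀def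
  have hV₀o : IsOpen V₀ := isOpen_interior
  have hvV₀ : v ∈ V₀ := mem_interior_iff_mem_nhds.2 hV
  have hV₀V : V₀ ⊆ V := interior_subset
  set Ω := e.target ∩ e.symm ⁻¹' (V₀ ×ˢ (univ : Set ↥T)) with hΩdef
  have hΩo : IsOpen Ω :=
    e.symm.continuousOn.isOpen_inter_preimage e.open_target (hV₀o.prod isOpen_univ)
  have hcΩ : (f v, k₀) ∈ Ω := by
    refine ⟨htgt, ?_⟩
    rw [mem_preimage, hsymm_v]
    exact ⟨hvV₀, mem_univ _⟩
  obtain ⟨ε, hε, hball⟩ : ∃ ε > 0, Metric.closedBall (f v, k₀) ε ⊆ Ω :=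
    (Metric.nhds_basis_closedBall.mem_iff).1 (hΩo.mem_nhds hcΩ)
  have hprodball :
      Metric.closedBall (f v) ε ×ˢ Metric.closedBall k₀ ε ⊆ Ω := by
    rw [closedBall_prod_same]; exact hball
  set U := Metric.ball (f v) ε with hUdef
  set N : Set L := {x : L | ((x, 0) : L × ↥T) ∈ e.source ∧ f x ∈ U ∧
    π x ∈ Metric.closedBall k₀ ε} with hNdef
  -- basic facts about points of `N`
  have hFx : ∀ x : L, F ((x, 0) : L × ↥T) = (f x, π x) := by
    intro x; simp [hFdef]
  have hmem : ∀ x ∈ N, e ((x, 0) : L × ↥T) = (f x, π x) ∧ (f x, π x) ∈ Ω ∧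
      e.symm (f x, π x) = ((x, 0) : L × ↥T) := by
    intro x hx
    have h1 : e ((x, 0) : L × ↥T) = (f x, π x) := by rw [hecoe]; exact hFx x
    have h2 : (f x, π x) ∈ Metric.closedBall (f v) ε ×ˢ Metric.closedBall k₀ ε :=
      ⟨Metric.ball_subset_closedBall hx.2.1, hx.2.2⟩
    exact ⟨h1, hprodball h2, by rw [← h1]; exact e.left_inv hx.1⟩
  -- `N` is a neighborhood of `v`
  have hNnhds : N ∈ 𝓝 v := by
    have h1 : {x : L | ((x, 0) : L × ↥T) ∈ e.source} ∈ 𝓝 v := by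
      have hc : Continuous fun x : L => ((x, 0) : L × ↥T) :=
        continuous_id.prodMk continuous_const
      exact hc.continuousAt.preimage_mem_nhds (e.open_source.mem_nhds hsrc)
    have h2 : f ⁻¹' U ∈ 𝓝 v :=
      (hf.continuous.continuousAt).preimage_mem_nhds (Metric.ball_mem_nhds _ hε)
    have h3 : (fun x : L => π x) ⁻¹' Metric.closedBall k₀ ε ∈ 𝓝 v :=
      π.continuous.continuousAt.preimage_mem_nhds (Metric.closedBall_mem_nhds _ hε)
    exact inter_mem h1 (inter_mem h2 h3)
  have hNsub : N ⊆ f ⁻¹' U ∩ V := by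
    intro x hx
    refine ⟨hx.2.1, ?_⟩
    obtain ⟨h1, hΩx, h3⟩ := hmem x hx
    have := hΩx.2
    rw [mem_preimage, h3] at this
    exact hV₀V this.1
  have hm : MapsTo f N U := fun x hx => hx.2.1
  refine ⟨N, hNnhds, U, Metric.ball_mem_nhds _ hε, hNsub, hm, ?_, ?_⟩
  · exact T2Space.isSeparatedMap _
  · -- properness
    rw [isProperMap_iff_isCompact_preimage]
    refine ⟨hf.continuous.restrict hm, ?_⟩
    intro Kc hKc
    set Kc' : Set Y := Subtype.val '' Kc with hKc'def
    have hKc'c : IsCompact Kc' := hKc.image continuous_subtype_val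
    have hKc'U : Kc' ⊆ U := by rintro _ ⟨q, hq, rfl⟩; exact q.2
    set P : Set L := {x : L | ((x, 0) : L × ↥T) ∈ e.source ∧ f x ∈ Kc' ∧
      π x ∈ Metric.closedBall k₀ ε} with hPdef
    have hPN : P ⊆ N := fun x hx => ⟨hx.1, hKc'U hx.2.1, hx.2.2⟩
    set Q : Set (Y × ↥(LinearMap.ker (D : L →ₗ[ℝ] Y))) :=
      (Kc' ×ˢ Metric.closedBall k₀ ε) ∩
        {z | z ∈ e.target ∧ (e.symm z).2 = (0 : ↥T)} with hQdef
    have hQsub : Q ⊆ Kc' ×ˢ Metric.closedBall k₀ ε := inter_subset_left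
    have hcontΩ : Kc' ×ˢ Metric.closedBall k₀ ε ⊆ Ω := fun z hz =>
      hprodball ⟨Metric.ball_subset_closedBall (hKc'U hz.1), hz.2⟩
    have hQclosed : IsClosed Q := by
      refine isClosed_of_closure_subset ?_
      intro z hz
      have hz1 : z ∈ Kc' ×ˢ Metric.closedBall k₀ ε :=
        closure_minimal hQsub (hKc'c.isClosed.prod Metric.isClosed_closedBall) hz
      have hzt : z ∈ e.target := (hcontΩ hz1).1
      have hca : ContinuousAt (fun w => (e.symm w).2) z :=
        continuous_snd.continuousAt.comp (e.symm.continuousAt hzt)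
      have hcl := mem_closure_image hca hz
      have himg : (fun w => (e.symm w).2) '' Q ⊆ {(0 : ↥T)} := by
        rintro _ ⟨w, hw, rfl⟩
        exact hw.2.2
      have h0 : (e.symm z).2 = (0 : ↥T) := by
        have := closure_minimal himg isClosed_singleton hcl
        simpa using this
      exact ⟨hz1, hzt, h0⟩
    have hQcomp : IsCompact Q :=
      (hKc'c.prod (isCompact_closedBall k₀ ε)).of_isClosed_subset hQclosed hQsub
    -- `P` is the image of `Q`
    have hPQ : P = (fun z => (e.symm z).1) '' Q := by
      ext x
      constructor
      · intro hx
        obtain ⟨h1, hΩx, h3⟩ := hmem x (hPN hx)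
        refine ⟨(f x, π x), ⟨⟨hx.2.1, hx.2.2⟩, hΩx.1, by rw [h3]⟩, ?_⟩
        show (e.symm (f x, π x)).1 = x
        rw [h3]
      · rintro ⟨z, ⟨hz1, hz2, hz3⟩, rfl⟩
        have hps : e.symm z ∈ e.source := e.map_target hz2
        have hez : e (e.symm z) = z := e.right_inv hz2
        have hp : e.symm z = (((e.symm z).1, 0) : L × ↥T) := by
          rw [← hz3]
        rw [hecoe] at hez
        rw [hp] at hez hps
        rw [hFx] at hez
        have hfz : f ((e.symm z).1) = z.1 := congrArg Prod.fst hez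
        have hπz : π ((e.symm z).1) = z.2 := congrArg Prod.snd hez
        exact ⟨hps, by rw [hfz]; exact hz1.1, by rw [hπz]; exact hz1.2⟩
    have hQtgt : Q ⊆ e.target := fun z hz => hz.2.1
    have hPcomp : IsCompact P := by
      rw [hPQ]
      exact hQcomp.image_of_continuousOn
        (continuous_fst.comp_continuousOn (e.symm.continuousOn.mono hQtgt))
    -- conclude: the preimage is compact
    have hpre : (hm.restrict f N U) ⁻¹' Kc = Subtype.val ⁻¹' P := by
      ext p
      constructor
      · intro h
        exact ⟨p.2.1, ⟨hm.restrict f N U p, h, rfl⟩, p.2.2.2⟩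
      · rintro ⟨h1, h2, h3⟩
        obtain ⟨q, hq, hqe⟩ := h2
        have : hm.restrict f N U p = q := Subtype.ext hqe.symm
        rw [mem_preimage, this]
        exact hq
    rw [hpre]
    rw [Topology.IsEmbedding.subtypeVal.isCompact_iff]
    rw [Subtype.image_preimage_coe]
    rwa [inter_eq_self_of_subset_right hPN]
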